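/- Let i : A ⊂ K be a small full dense subcategory of a cocomplete category K, and let L := Lan_y i : Set^{A^op} → K and R := Lan_i y ≅ K(i−,−) : K → Set^{A^op} be the induced adjunction L ⊣ R. Then composing with the Isbell adjunction swaps the sides: O ∘ R : K → (Set^A)^op is left adjoint to L ∘ Spec : (Set^A)^op → K. -/

import Mathlib

/-!
STATEMENT 2: For a small full dense subcategory `i : A ⊂ K` of a cocomplete category `K`,
with induced adjunction `L := Lan_y i ⊣ R := K(i-,-)`, composing with the Isbell adjunction
swaps the sides: `O ∘ R : K ⥤ (Set^A)ᵒᵖ` is left adjoint to `L ∘ Spec : (Set^A)ᵒᵖ ⥤ K`.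
Here `O := Lan_y y♯` and `Spec := Ran_{y♯} y`, and density of `i` means that the
nerve functor `K(i-,-)` (i.e. `Presheaf.restrictedYoneda i`) is fully faithful.
-/

universe v u

universe v₁ u₁ u₂

open CategoryTheory Functor Limits

noncomputable section

/-- The old Mathlib `Presheaf.restrictedYoneda` (removed upstream), with its old meaning:
`E ↦ (c ↦ (A.obj c ⟶ E))`, landing in `Type v₁` without `ULift`. -/
def Presheaf.restrictedYoneda {C : Type u₁} [Category.{v₁} C] {ℰ : Type u₂} [Category.{v₁} ℰ]
    (A : C ⥤ ℰ) : ℰ ⥤ Cᵒᵖ ⥤ Type v₁ :=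
  yoneda ⋙ (whiskeringLeft _ _ (Type v₁)).obj (Functor.op A)

/-- The copresheaf embedding `y♯ : A ⥤ (Set^A)ᵒᵖ`, `a ↦ A(a, -)`. -/
def ysharp (A : Type u) [SmallCategory A] : A ⥤ (A ⥤ Type u)ᵒᵖ := coyoneda.rightOp

open Opposite

namespace IsbellAux
variable {A : Type u} [SmallCategory A]

/-- `(P ⟶ y♯ b) ≃ P.unop.obj b`. -/
def hatEquiv {P : (A ⥤ Type u)ᵒᵖ} {b : A} : (P ⟶ (ysharp A).obj b) ≃ P.unop.obj b where
  toFun f := f.unop.app b (𝟙 b)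
  invFun q := (coyonedaEquiv.symm q).op
  left_inv f := by
    change (coyonedaEquiv.symm (coyonedaEquiv f.unop)).op = f
    exact Quiver.Hom.unop_inj ((coyonedaEquiv (F := P.unop) (X := b)).symm_apply_apply f.unop)
  right_inv q := by
    change coyonedaEquiv (coyonedaEquiv.symm q) = q
    rw [Equiv.apply_symm_apply]

lemma comp_hat {P P' : (A ⥤ Type u)ᵒᵖ} (p : P ⟶ P') {b : A} (q : P'.unop.obj b) :
    p ≫ hatEquiv.symm q = hatEquiv.symm (p.unop.app b q) := by
  apply Quiver.Hom.unop_inj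
  change coyonedaEquiv.symm q ≫ p.unop = coyonedaEquiv.symm (p.unop.app b q)
  apply coyonedaEquiv.injective
  rw [coyonedaEquiv_comp, Equiv.apply_symm_apply, Equiv.apply_symm_apply]

lemma hat_comp_map {P : (A ⥤ Type u)ᵒᵖ} {b b' : A} (g : b ⟶ b') (q : P.unop.obj b) :
    (hatEquiv.symm q : P ⟶ _) ≫ (ysharp A).map g = hatEquiv.symm (P.unop.map g q) := by
  apply Quiver.Hom.unop_inj
  change coyoneda.map g.op ≫ coyonedaEquiv.symm q = coyonedaEquiv.symm (P.unop.map g q)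
  apply coyonedaEquiv.injective
  rw [Equiv.apply_symm_apply, ← coyonedaEquiv_naturality, Equiv.apply_symm_apply]

lemma hat_id (b : A) :
    (hatEquiv.symm (𝟙 b) : (ysharp A).obj b ⟶ (ysharp A).obj b) = 𝟙 _ := by
  apply hatEquiv.injective
  refine ((hatEquiv (P := (ysharp A).obj b) (b := b)).apply_symm_apply (𝟙 b)).trans ?_
  change (𝟙 ((ysharp A).obj b)).unop.app b (𝟙 b) = 𝟙 b
  rfl

lemma hatEquiv_symm_apply_eq {P : (A ⥤ Type u)ᵒᵖ} {b : A} (f : P ⟶ (ysharp A).obj b) :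
    hatEquiv.symm (f.unop.app b (𝟙 b)) = f :=
  hatEquiv.left_inv f

/-- The counit exhibiting `restrictedYoneda y♯` as the right Kan extension of yoneda along y♯. -/
def specCounit : ysharp A ⋙ Presheaf.restrictedYoneda (ysharp A) ⟶ yoneda where
  app a :=
    { app := fun b => TypeCat.ofHom fun (f : (ysharp A).obj b.unop ⟶ (ysharp A).obj a) =>
          (f.unop.app a (𝟙 a) : b.unop ⟶ a)
      naturality := by
        intro b b' m
        ext f
        show ((ysharp A).map m.unop ≫ f).unop.app a (𝟙 a) = m.unop ≫ f.unop.app a (𝟙 a)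
        erw [unop_comp]
        simp [ysharp]
        rfl }
  naturality := by
    intro a a' g
    ext b f
    show (f ≫ (ysharp A).map g).unop.app a' (𝟙 a') = f.unop.app a (𝟙 a) ≫ g
    erw [unop_comp]
    have := ConcreteCategory.congr_hom (f.unop.naturality g) (𝟙 a)
    have e : g ≫ 𝟙 a' = 𝟙 a ≫ g := by simp
    change f.unop.app a' (g ≫ 𝟙 a') = _
    rw [e]
    exact this


section lift
variable {G : (A ⥤ Type u)ᵒᵖ ⥤ (Aᵒᵖ ⥤ Type u)} (β : ysharp A ⋙ G ⟶ yoneda)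

/-- Auxiliary component of the universal lift. -/
def liftAux (P : (A ⥤ Type u)ᵒᵖ) (a : Aᵒᵖ) (x : (G.obj P).obj a) :
    P.unop ⟶ coyoneda.obj (op a.unop) where
  app b := TypeCat.ofHom fun q => (β.app b).app a ((G.map (hatEquiv.symm q)).app a x)
  naturality b b' g := by
    ext q
    show (β.app b').app a ((G.map (hatEquiv.symm (P.unop.map g q))).app a x) =
      (coyoneda.obj (op a.unop)).map g ((β.app b).app a ((G.map (hatEquiv.symm q)).app a x))
    rw [← hat_comp_map, G.map_comp]
    have h1 := ConcreteCategory.congr_hom (NatTrans.congr_app (β.naturality g) a)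
      ((G.map (hatEquiv.symm q : P ⟶ _)).app a x)
    simp only [comp_obj, NatTrans.comp_app, types_comp_apply, FunctorToTypes.comp] at h1 ⊢
    rw [show G.map ((ysharp A).map g) = (ysharp A ⋙ G).map g from rfl, h1]
    simp [yoneda]

/-- The universal lift to `restrictedYoneda y♯`. -/
def liftNT : G ⟶ Presheaf.restrictedYoneda (ysharp A) where
  app P :=
    { app := fun a => TypeCat.ofHom fun x => (liftAux β P a x).op
      naturality := by
        intro a a' m
        ext x
        show (liftAux β P a' ((G.obj P).map m x)).op = (ysharp A).map m.unop ≫ (liftAux β P a x).op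
        apply Quiver.Hom.unop_inj
        erw [unop_comp]
        ext b q
        show (β.app b).app a' ((G.map (hatEquiv.symm q)).app a' ((G.obj P).map m x)) =
          (((ysharp A).map m.unop).unop).app b ((liftAux β P a x).app b q)
        have h1 := ConcreteCategory.congr_hom ((G.map (hatEquiv.symm q : P ⟶ _)).naturality m) x
        simp only [types_comp_apply] at h1
        rw [h1]
        have h2 := ConcreteCategory.congr_hom ((β.app b).naturality m) ((G.map (hatEquiv.symm q : P ⟶ _)).app a x)
        simp only [comp_obj, types_comp_apply] at h2
        rw [h2]
        simp [ysharp, liftAux]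
        rfl }
  naturality := by
    intro P P' p
    ext a x
    show (liftAux β P' a ((G.map p).app a x)).op = (liftAux β P a x).op ≫ p
    apply Quiver.Hom.unop_inj
    rw [unop_comp]
    ext b q
    show (β.app b).app a ((G.map (hatEquiv.symm q)).app a ((G.map p).app a x)) =
      (liftAux β P a x).app b (p.unop.app b q)
    rw [show (G.map (hatEquiv.symm q)).app a ((G.map p).app a x)
        = (G.map (p ≫ hatEquiv.symm q)).app a x by rw [G.map_comp]; rfl, comp_hat]
    rfl

lemma liftNT_fac : Functor.whiskerLeft (ysharp A) (liftNT β) ≫ specCounit = β := by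
  ext a b x
  show ((((liftNT β).app ((ysharp A).obj a)).app b x).unop).app a (𝟙 a) = (β.app a).app b x
  show (β.app a).app b ((G.map (hatEquiv.symm (𝟙 a))).app b x) = (β.app a).app b x
  rw [hat_id, G.map_id]
  rfl

lemma lift_unique (φ : G ⟶ Presheaf.restrictedYoneda (ysharp A))
    (h : Functor.whiskerLeft (ysharp A) φ ≫ specCounit = β) : φ = liftNT β := by
  ext P a x
  show (φ.app P).app a x = (liftAux β P a x).op
  apply Quiver.Hom.unop_inj
  ext b q
  show ((φ.app P).app a x).unop.app b q =
    (β.app b).app a ((G.map (hatEquiv.symm q)).app a x)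
  rw [← h]
  show ((φ.app P).app a x).unop.app b q =
    ((φ.app ((ysharp A).obj b)).app a ((G.map (hatEquiv.symm q)).app a x)).unop.app b (𝟙 b)
  have h1 := ConcreteCategory.congr_hom (NatTrans.congr_app (φ.naturality (hatEquiv.symm q : P ⟶ _)) a) x
  simp only [NatTrans.comp_app, types_comp_apply] at h1
  rw [h1]
  show ((φ.app P).app a x).unop.app b q =
    (((φ.app P).app a x ≫ (hatEquiv.symm q : P ⟶ _)).unop).app b (𝟙 b)
  erw [unop_comp]
  show ((φ.app P).app a x).unop.app b q =
    ((φ.app P).app a x).unop.app b ((coyonedaEquiv.symm q).app b (𝟙 b))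
  rw [coyonedaEquiv_symm_app_apply]
  simp

end lift

instance : (Presheaf.restrictedYoneda (ysharp A)).IsRightKanExtension
    (specCounit (A := A)) where
  nonempty_isUniversal := ⟨IsTerminal.ofUniqueHom
    (fun Y => CostructuredArrow.homMk (liftNT Y.hom) (liftNT_fac Y.hom))
    (fun Y m => by
      ext1
      exact lift_unique Y.hom m.left (CostructuredArrow.w m))⟩

/-- `Spec = Ran_{y♯} y` is isomorphic to `restrictedYoneda y♯`. -/
def specIso : (ysharp A).rightKanExtension yoneda ≅ Presheaf.restrictedYoneda (ysharp A) :=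
  Functor.rightKanExtensionUnique _ ((ysharp A).rightKanExtensionCounit yoneda)
    _ specCounit

section Local

variable {C : Type*} [Category C] {D : Type*} [Category D]

/-- An object is local if maps into it see `L`-isomorphisms as isomorphisms. -/
def IsLocal (L : C ⥤ D) (X : C) : Prop :=
  ∀ ⦃Y Y' : C⦄ (f : Y ⟶ Y'), IsIso (L.map f) → Function.Bijective (fun g : Y' ⟶ X => f ≫ g)

variable {L : C ⥤ D} {R : D ⥤ C}

lemma isLocal_of_iso {X X' : C} (e : X ≅ X') (h : IsLocal L X) : IsLocal L X' := by
  intro Y Y' f hf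
  constructor
  · intro g g' hgg
    have := (h f hf).injective (a₁ := g ≫ e.inv) (a₂ := g' ≫ e.inv) (by
      simp only [← Category.assoc]
      rw [show f ≫ g = f ≫ g' from hgg])
    simpa using congrArg (fun t => t ≫ e.hom) this
  · intro w
    obtain ⟨u, hu⟩ := (h f hf).surjective (w ≫ e.inv)
    refine ⟨u ≫ e.hom, ?_⟩
    have : f ≫ u = w ≫ e.inv := hu
    show f ≫ u ≫ e.hom = w
    rw [← Category.assoc, this]
    simp

lemma isLocal_R (adj : L ⊣ R) (k : D) : IsLocal L (R.obj k) := by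
  intro Y Y' f hf
  constructor
  · intro g g' hgg
    apply (adj.homEquiv _ _).symm.injective
    have h1 := adj.homEquiv_naturality_left_symm f g
    have h2 := adj.homEquiv_naturality_left_symm f g'
    have : (adj.homEquiv Y k).symm (f ≫ g) = (adj.homEquiv Y k).symm (f ≫ g') := by
      rw [show f ≫ g = f ≫ g' from hgg]
    rw [h1, h2] at this
    exact (cancel_epi (L.map f)).mp this
  · intro w
    refine ⟨adj.homEquiv _ _ (inv (L.map f) ≫ (adj.homEquiv _ _).symm w), ?_⟩
    show f ≫ _ = w
    rw [← adj.homEquiv_naturality_left]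
    simp

lemma unit_app_isIso_of_isLocal (adj : L ⊣ R) [R.Full] [R.Faithful] (X : C) (h : IsLocal L X) :
    IsIso (adj.unit.app X) := by
  have hli : IsIso (L.map (adj.unit.app X)) := inferInstance
  obtain ⟨g, hg⟩ := (h (adj.unit.app X) hli).surjective (𝟙 X)
  refine ⟨g, hg, ?_⟩
  apply (isLocal_R adj (L.obj X) (adj.unit.app X) hli).injective
  show adj.unit.app X ≫ g ≫ adj.unit.app X = adj.unit.app X ≫ 𝟙 _
  rw [← Category.assoc, show adj.unit.app X ≫ g = 𝟙 X from hg]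
  simp

lemma isLocal_of_isLimit {J : Type*} [Category J] {F : J ⥤ C} (c : Cone F)
    (hc : IsLimit c) (h : ∀ j, IsLocal L (F.obj j)) : IsLocal L c.pt := by
  intro Y Y' f hf
  constructor
  · intro g g' hgg
    apply hc.hom_ext
    intro j
    apply (h j f hf).injective
    show f ≫ g ≫ c.π.app j = f ≫ g' ≫ c.π.app j
    simp only [← Category.assoc]
    rw [show f ≫ g = f ≫ g' from hgg]
  · intro w
    choose wj hwj using fun j => (h j f hf).surjective (w ≫ c.π.app j)
    have hwj' : ∀ j, f ≫ wj j = w ≫ c.π.app j := hwj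
    let s : Cone F :=
      { pt := Y'
        π :=
          { app := wj
            naturality := by
              intro j j' t
              apply (h j' f hf).injective
              show f ≫ 𝟙 Y' ≫ wj j' = f ≫ wj j ≫ F.map t
              rw [Category.id_comp, hwj' j', ← Category.assoc, hwj' j, Category.assoc, c.w t] } }
    refine ⟨hc.lift s, ?_⟩
    apply hc.hom_ext
    intro j
    show (f ≫ hc.lift s) ≫ c.π.app j = w ≫ c.π.app j
    rw [Category.assoc, hc.fac s j]
    exact hwj' j

end Local

section ConeOfRepresentables
variable (P : (A ⥤ Type u)ᵒᵖ)

/-- `Spec' P` as a cone over representables indexed by elements of `P.unop`. -/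
def specCone : Cone (CategoryOfElements.π P.unop ⋙ yoneda) where
  pt := (Presheaf.restrictedYoneda (ysharp A)).obj P
  π :=
    { app := fun e =>
        { app := fun a => TypeCat.ofHom fun (f : (ysharp A).obj a.unop ⟶ P) =>
            ((f : (ysharp A).obj a.unop ⟶ P).unop.app e.1 e.2 : a.unop ⟶ e.1)
          naturality := by
            intro a a' m
            ext f
            show ((ysharp A).map m.unop ≫ (f : (ysharp A).obj a.unop ⟶ P)).unop.app e.1 e.2 =
              m.unop ≫ (f : (ysharp A).obj a.unop ⟶ P).unop.app e.1 e.2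
            erw [unop_comp]
            simp [ysharp]
            rfl }
      naturality := by
        rintro ⟨b, q⟩ ⟨b', q'⟩ ⟨g, hg⟩
        dsimp at g hg
        ext a f
        show (f : (ysharp A).obj a.unop ⟶ P).unop.app b' q' =
          (f : (ysharp A).obj a.unop ⟶ P).unop.app b q ≫ g
        rw [← hg]
        have h1 := ConcreteCategory.congr_hom ((f : (ysharp A).obj a.unop ⟶ P).unop.naturality g) q
        simp only [types_comp_apply] at h1
        rw [h1]
        rfl }

/-- Auxiliary construction for the limit lift. -/
def specConeLiftAux (s : Cone (CategoryOfElements.π P.unop ⋙ yoneda)) (a : Aᵒᵖ)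
    (t : s.pt.obj a) : P.unop ⟶ coyoneda.obj (op a.unop) where
  app b := TypeCat.ofHom fun q => (s.π.app ⟨b, q⟩).app a t
  naturality := by
    intro b b' g
    ext q
    have h1 := ConcreteCategory.congr_hom (NatTrans.congr_app
      (s.w (CategoryOfElements.homMk ⟨b, q⟩ ⟨b', P.unop.map g q⟩ g rfl)) a) t
    show (s.π.app ⟨b', P.unop.map g q⟩).app a t = (s.π.app ⟨b, q⟩).app a t ≫ g
    rw [← h1]
    rfl

/-- The cone `specCone` is a limit cone. -/
def specConeIsLimit : IsLimit (specCone (A := A) P) where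
  lift s :=
    { app := fun a => TypeCat.ofHom fun t => (specConeLiftAux P s a t).op
      naturality := by
        intro a a' m
        ext t
        show (specConeLiftAux P s a' (s.pt.map m t)).op =
          (ysharp A).map m.unop ≫ (specConeLiftAux P s a t).op
        apply Quiver.Hom.unop_inj
        erw [unop_comp]
        ext b q
        show (s.π.app ⟨b, q⟩).app a' (s.pt.map m t) =
          (((ysharp A).map m.unop).unop).app b ((s.π.app ⟨b, q⟩).app a t)
        have h1 := ConcreteCategory.congr_hom ((s.π.app ⟨b, q⟩).naturality m) t
        simp only [comp_obj, const_obj_obj, types_comp_apply, const_obj_map] at h1 ⊢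
        erw [h1]
        simp [ysharp]
        rfl }
  fac s e := by
    ext a t
    rfl
  uniq s m hm := by
    ext a t
    apply Quiver.Hom.unop_inj
    ext b q
    have h1 := ConcreteCategory.congr_hom (NatTrans.congr_app (hm ⟨b, q⟩) a) t
    simp only [NatTrans.comp_app, types_comp_apply] at h1
    exact h1

end ConeOfRepresentables

section Main

/-- Replacement for the removed `Presheaf.yonedaAdjunction`, for the plain Yoneda embedding. -/
def yonedaAdj {E : Type*} [Category.{u} E] [HasColimitsOfSize.{u, u} E] (F : A ⥤ E) :
    yoneda.leftKanExtension F ⊣ Presheaf.restrictedYoneda F := by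
  let e : (yoneda : A ⥤ Aᵒᵖ ⥤ Type u) ≅ uliftYoneda.{u} := uliftYonedaIsoYoneda.{u}.symm
  let Ψ := Functor.leftExtensionEquivalenceOfIso₁ e F
  let X := LeftExtension.mk (yoneda.leftKanExtension F) (yoneda.leftKanExtensionUnit F)
  have hX : IsInitial X := (yoneda.leftKanExtension F).isUniversalOfIsLeftKanExtension _
  have hY : IsInitial (Ψ.functor.obj X) := (IsInitial.isInitialIffObj Ψ.functor X) hX
  haveI : (Ψ.functor.obj X).right.IsLeftKanExtension (Ψ.functor.obj X).hom := ⟨⟨hY⟩⟩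
  exact (Presheaf.uliftYonedaAdjunction.{u} _ (Ψ.functor.obj X).hom).ofNatIsoRight
    (Functor.isoWhiskerRight uliftYonedaIsoYoneda.{u} _)

variable {K : Type v} [Category.{u} K] [HasColimitsOfSize.{u, u} K]
variable (i : A ⥤ K) [i.Full] [i.Faithful]

/-- The representable presheaf `y b` is isomorphic to the nerve of `i b`. -/
def yonedaIsoNerve (b : A) : yoneda.obj b ≅ (Presheaf.restrictedYoneda i).obj (i.obj b) :=
  NatIso.ofComponents
    (fun a => Equiv.toIso ((Functor.FullyFaithful.ofFullyFaithful i).homEquiv))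
    (by
      intro a a' m
      ext g
      show i.map (m.unop ≫ g) = i.map m.unop ≫ i.map g
      simp)

/-- The adjunction `Lan_y i ⊣ K(i-,-)`. -/
def adjL : yoneda.leftKanExtension i ⊣ Presheaf.restrictedYoneda i :=
  yonedaAdj i

lemma isLocal_yoneda_obj (b : A) : IsLocal (yoneda.leftKanExtension i) (yoneda.obj b) :=
  isLocal_of_iso (yonedaIsoNerve i b).symm (isLocal_R (adjL i) (i.obj b))

lemma isLocal_spec_obj (P : (A ⥤ Type u)ᵒᵖ) :
    IsLocal (yoneda.leftKanExtension i) ((Presheaf.restrictedYoneda (ysharp A)).obj P) :=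
  isLocal_of_isLimit (specCone P) (specConeIsLimit P) (fun e => isLocal_yoneda_obj i e.1)

end Main
end IsbellAux


open IsbellAux

theorem isbell_swaps_adjunctions
    (A : Type u) [SmallCategory A] {K : Type v} [Category.{u} K]
    [HasColimitsOfSize.{u, u} K]
    -- `i` is a full subcategory of `K` ...
    (i : A ⥤ K) [i.Full] [i.Faithful]
    -- ... which is dense, i.e. the nerve `K(i-,-)` is fully faithful:
    [(Presheaf.restrictedYoneda i).Full] [(Presheaf.restrictedYoneda i).Faithful] :
    Nonempty ((Presheaf.restrictedYoneda i ⋙ yoneda.leftKanExtension (ysharp A)) ⊣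
      ((ysharp A).rightKanExtension yoneda ⋙ yoneda.leftKanExtension i)) := by
  letI L := yoneda.leftKanExtension i
  letI R := Presheaf.restrictedYoneda i
  letI O := yoneda.leftKanExtension (ysharp A)
  letI Spec' := Presheaf.restrictedYoneda (ysharp A)
  have adjO : O ⊣ Spec' :=
    yonedaAdj (ysharp A)
  have adjL' : L ⊣ R := adjL i
  haveI hloc : ∀ P : (A ⥤ Type u)ᵒᵖ, IsIso (adjL'.unit.app (Spec'.obj P)) := fun P =>
    unit_app_isIso_of_isLocal adjL' _ (isLocal_spec_obj i P)
  let comm2 : 𝟭 _ ⋙ Spec' ≅ (Spec' ⋙ L) ⋙ R :=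
    NatIso.ofComponents (fun P => asIso (adjL'.unit.app (Spec'.obj P)))
      (by
        intro P P' p
        exact adjL'.unit.naturality (Spec'.map p))
  let adjMain : (R ⋙ O) ⊣ (Spec' ⋙ L) :=
    adjO.restrictFullyFaithful (Functor.FullyFaithful.ofFullyFaithful R)
      (Functor.FullyFaithful.id _) (Functor.rightUnitor (R ⋙ O)).symm comm2
  exact ⟨adjMain.ofNatIsoRight (isoWhiskerRight (specIso (A := A)).symm L)⟩


end
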